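/- Let H be a Hilbert space, f ∈ H, and suppose f admits a cluster expansion into components g^1, …, g^N with the orthogonality properties of correlation functions: then ‖f‖² = ∑_{m=1}^{N} C(N-1, m-1) ‖g^m‖². Concretely: let f_N ∈ L²((𝕋^d)^N) be symmetric in its last N-1 variables, and define g_N^m via g_N^m(x_1,…,x_m) = ∑_{n=1}^{m} (-1)^{m-n} ∑_{σ ∈ P_{n-1}^{m-1}} f_N^n(x_1, x_σ) where f_N^m is the m-th marginal of f_N; assuming each g_N^m integrates to zero in each of its last m-1 variables, one has ∫_{(𝕋^d)^N} |f_N|² = ∑_{m=1}^{N} C(N-1, m-1) ∫_{(𝕋^d)^m} |g_N^m|². -/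

import Mathlib

open MeasureTheory

/-- The `d`-dimensional torus `𝕋^d`. -/
abbrev Torus (d : ℕ) := Fin d → AddCircle (1 : ℝ)

/-- Glue a tuple of the first `m` variables with a tuple of the remaining `N - m`
variables into a point of the `N`-fold product. -/
def glueVars {X : Type*} (N m : ℕ) (hm : m ≤ N)
    (y : Fin m → X) (z : Fin (N - m) → X) : Fin N → X :=
  fun i =>
    if h : (i : ℕ) < m then y ⟨i, h⟩
    else z ⟨(i : ℕ) - m, by have := i.isLt; omega⟩

/-- Given `y : Fin (m+1) → X` and a subset `σ` of indices (not containing `0`),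
`selVars y σ` is the tuple `(y 0, y_σ)` where the elements of `σ` are taken in
increasing order. -/
def selVars {X : Type*} {m n : ℕ} (y : Fin (m + 1) → X)
    (σ : Finset (Fin (m + 1))) : Fin (n + 1) → X :=
  fun j => y ((Finset.sort (insert 0 σ) (· ≤ ·)).getD (j : ℕ) 0)

/- ### Auxiliary lemmas -/

instance torusProb : IsProbabilityMeasure (volume : Measure (AddCircle (1:ℝ))) :=
  ⟨by rw [AddCircle.measure_univ]; norm_num⟩

lemma memL2_mul_integrable {α : Type*} [MeasurableSpace α] {μ : Measure α} {f g : α → ℝ}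
    (hf : MemLp f 2 μ) (hg : MemLp g 2 μ) : Integrable (fun x => f x * g x) μ := by
  have h := L2.integrable_inner (𝕜 := ℝ) (hf.toLp f) (hg.toLp g)
  refine h.congr ?_
  filter_upwards [hf.coeFn_toLp, hg.coeFn_toLp] with x hfx hgx
  simp [hfx, hgx, RCLike.inner_apply, mul_comm]

lemma measurePreserving_comp_inj {X : Type*} [MeasureSpace X]
    [IsProbabilityMeasure (volume : Measure X)]
    {k N : ℕ} (e : Fin k → Fin N) (he : Function.Injective e) :
    MeasurePreserving (fun x : Fin N → X => x ∘ e) volume volume := by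
  classical
  have hmeas : Measurable (fun x : Fin N → X => x ∘ e) :=
    measurable_pi_iff.2 fun j => measurable_pi_apply (e j)
  refine ⟨hmeas, ?_⟩
  refine (Measure.pi_eq fun s hs => ?_).symm
  rw [Measure.map_apply hmeas (MeasurableSet.univ_pi hs)]
  set T : Fin N → Set X := fun i => if h : ∃ j, e j = i then s h.choose else Set.univ with hT
  have hTe : ∀ j, T (e j) = s j := by
    intro j
    have h : ∃ j', e j' = e j := ⟨j, rfl⟩
    have hc : h.choose = j := he h.choose_spec
    simp only [hT, dif_pos h, hc]
  have hpre : (fun x : Fin N → X => x ∘ e) ⁻¹' Set.pi Set.univ s = Set.pi Set.univ T := by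
    ext x
    simp only [Set.mem_preimage, Set.mem_pi, Set.mem_univ, true_implies]
    constructor
    · intro hx i
      by_cases h : ∃ j, e j = i
      · simp only [hT, dif_pos h]
        have := hx h.choose
        simp only [Function.comp_apply, h.choose_spec] at this
        exact this
      · simp [hT, dif_neg h]
    · intro hx j
      have := hx (e j)
      rwa [hTe j] at this
  rw [hpre, volume_pi, Measure.pi_pi]
  have h1 : ∀ i ∈ Finset.univ, i ∉ Finset.univ.image e → volume (T i) = 1 := by
    intro i _ hi
    have h : ¬ ∃ j, e j = i := by
      rintro ⟨j, rfl⟩; exact hi (Finset.mem_image.2 ⟨j, Finset.mem_univ _, rfl⟩)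
    simp [hT, dif_neg h]
  rw [← Finset.prod_subset (Finset.subset_univ (Finset.univ.image e)) h1,
    Finset.prod_image (fun j _ j' _ h => he h)]
  exact Finset.prod_congr rfl fun j _ => by rw [hTe j]

lemma integral_comp_inj {X : Type*} [MeasureSpace X]
    [IsProbabilityMeasure (volume : Measure X)]
    {k N : ℕ} (e : Fin k → Fin N) (he : Function.Injective e)
    (G : (Fin k → X) → ℝ) (hG : AEStronglyMeasurable G (volume : Measure (Fin k → X))) :
    ∫ x : Fin N → X, G (x ∘ e) = ∫ y : Fin k → X, G y := by
  have h : MeasurePreserving (fun x : Fin N → X => x ∘ e) volume volume :=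
    measurePreserving_comp_inj e he
  calc ∫ x : Fin N → X, G (x ∘ e)
      = ∫ y, G y ∂(Measure.map (fun x : Fin N → X => x ∘ e) volume) :=
        (integral_map h.measurable.aemeasurable (by rw [h.map_eq]; exact hG)).symm
    _ = ∫ y : Fin k → X, G y := by rw [h.map_eq]

lemma cross_zero {X : Type*} [MeasureSpace X] [IsProbabilityMeasure (volume : Measure X)]
    [Nonempty X]
    {M n a : ℕ} (G : (Fin (n+1) → X) → ℝ) (H : (Fin (a+1) → X) → ℝ)
    (e : Fin (n+1) → Fin (M+1)) (e' : Fin (a+1) → Fin (M+1)) (he : Function.Injective e)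
    (hint : Integrable (fun x : Fin (M+1) → X => G (x ∘ e) * H (x ∘ e')) volume)
    (k : Fin (n+1))
    (hzero : ∀ y : Fin (n+1) → X, (∫ x : X, G (Function.update y k x)) = 0)
    (hj : ∀ l, e' l ≠ e k) :
    ∫ x : Fin (M+1) → X, G (x ∘ e) * H (x ∘ e') = 0 := by
  classical
  set j := e k with hjdef
  set φ := MeasurableEquiv.piFinSuccAbove (fun _ : Fin (M+1) => X) j with hφdef
  have hmp : MeasurePreserving φ (volume : Measure (Fin (M+1) → X))
      ((volume : Measure X).prod (volume : Measure (Fin M → X))) :=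
    measurePreserving_piFinSuccAbove (fun _ : Fin (M+1) => volume) j
  have hsymm : ∀ (b : X) (w : Fin M → X), φ.symm (b, w) = j.insertNth b w := fun _ _ => rfl
  set F : (Fin (M+1) → X) → ℝ := fun x => G (x ∘ e) * H (x ∘ e') with hFdef
  have hFint : Integrable (F ∘ φ.symm) ((volume : Measure X).prod volume) :=
    ((hmp.symm φ).integrable_comp_emb φ.symm.measurableEmbedding).mpr hint
  have hEq : ∫ x : Fin (M+1) → X, F x
      = ∫ p : X × (Fin M → X), (F ∘ φ.symm) p ∂((volume : Measure X).prod volume) :=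
    ((hmp.symm φ).integral_comp φ.symm.measurableEmbedding F).symm
  rw [show (∫ x : Fin (M+1) → X, G (x ∘ e) * H (x ∘ e')) = ∫ x : Fin (M+1) → X, F x from rfl,
    hEq, integral_prod_symm _ hFint]
  have inner : ∀ w : Fin M → X,
      (∫ b : X, (F ∘ φ.symm) (b, w)) = 0 := by
    intro w
    have x₀ : X := Classical.arbitrary X
    set Y : Fin (M+1) → X := j.insertNth x₀ w with hY
    have hupd : ∀ b : X, j.insertNth b w = Function.update Y j b := by
      intro b; funext i
      by_cases hi : i = j
      · subst hi; simp [Fin.insertNth_apply_same, hY]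
      · obtain ⟨l, hl⟩ := Fin.exists_succAbove_eq hi
        rw [Function.update_of_ne hi, ← hl, Fin.insertNth_apply_succAbove, hY,
          Fin.insertNth_apply_succAbove]
    have hbody : ∀ b : X, (F ∘ φ.symm) (b, w)
        = G (Function.update (Y ∘ e) k b) * H (Y ∘ e') := by
      intro b
      have h2 : (j.insertNth b w) ∘ e = Function.update (Y ∘ e) k b := by
        rw [hupd, hjdef, Function.update_comp_eq_of_injective Y he k b]
      have h1 : (j.insertNth b w) ∘ e' = Y ∘ e' := by
        rw [hupd]; funext l; exact Function.update_of_ne (hj l) _ _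
      simp only [Function.comp_apply, hsymm, hFdef]
      rw [show (j.insertNth b w ∘ e) = Function.update (Y ∘ e) k b from h2,
        show (j.insertNth b w ∘ e') = Y ∘ e' from h1]
    simp only [hbody]
    rw [integral_mul_const, hzero, zero_mul]
  simp only [inner, integral_zero]

/- ### The selection map -/

def selMap {m : ℕ} (n : ℕ) (σ : Finset (Fin (m+1))) : Fin (n+1) → Fin (m+1) :=
  fun j => (Finset.sort (insert 0 σ) (· ≤ ·)).getD (j : ℕ) 0

lemma selVars_eq_comp {X : Type*} {m n : ℕ} (y : Fin (m+1) → X) (σ : Finset (Fin (m+1))) :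
    selVars (n := n) y σ = y ∘ selMap n σ := rfl

section sel
variable {m n : ℕ} {σ : Finset (Fin (m+1))}

lemma sel_length (h0 : (0 : Fin (m+1)) ∉ σ) (hc : σ.card = n) :
    (Finset.sort (insert 0 σ) (· ≤ ·)).length = n + 1 := by
  rw [Finset.length_sort, Finset.card_insert_of_notMem h0, hc]

lemma selMap_eq_get (h0 : (0 : Fin (m+1)) ∉ σ) (hc : σ.card = n) (j : Fin (n+1)) :
    selMap n σ j = (Finset.sort (insert 0 σ) (· ≤ ·)).get
      ⟨(j : ℕ), by rw [sel_length h0 hc]; exact j.isLt⟩ := by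
  have hj : (j : ℕ) < (Finset.sort (insert 0 σ) (· ≤ ·)).length := by
    rw [sel_length h0 hc]; exact j.isLt
  simp [selMap, List.getD_eq_getElem _ _ hj, List.get_eq_getElem, List.getElem?_eq_getElem hj]

lemma selMap_strictMono (h0 : (0 : Fin (m+1)) ∉ σ) (hc : σ.card = n) :
    StrictMono (selMap n σ) := by
  intro a b hab
  rw [selMap_eq_get h0 hc, selMap_eq_get h0 hc]
  exact List.Pairwise.rel_get_of_lt (Finset.sortedLT_sort _).pairwise (Fin.mk_lt_mk.mpr hab)

lemma selMap_inj (h0 : (0 : Fin (m+1)) ∉ σ) (hc : σ.card = n) :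
    Function.Injective (selMap n σ) :=
  (selMap_strictMono h0 hc).injective

lemma selMap_zero (h0 : (0 : Fin (m+1)) ∉ σ) (hc : σ.card = n) :
    selMap n σ 0 = 0 := by
  have h0mem : (0 : Fin (m+1)) ∈ Finset.sort (insert 0 σ) (· ≤ ·) := by
    rw [Finset.mem_sort]; exact Finset.mem_insert_self _ _
  obtain ⟨idx, hidx⟩ := List.mem_iff_get.mp h0mem
  have hle : selMap n σ 0 ≤ 0 := by
    rw [selMap_eq_get h0 hc]
    calc (Finset.sort (insert 0 σ) (· ≤ ·)).get ⟨((0 : Fin (n+1)) : ℕ), _⟩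
        ≤ (Finset.sort (insert 0 σ) (· ≤ ·)).get idx :=
          List.Pairwise.rel_get_of_le (Finset.pairwise_sort _ _)
            (by rw [Fin.le_def]; exact Nat.zero_le _)
      _ = 0 := hidx
  exact le_antisymm hle (Fin.zero_le _)

lemma selMap_surj_iff (h0 : (0 : Fin (m+1)) ∉ σ) (hc : σ.card = n) (i : Fin (m+1)) :
    (∃ l, selMap n σ l = i) ↔ i ∈ insert 0 σ := by
  constructor
  · rintro ⟨l, rfl⟩
    rw [selMap_eq_get h0 hc, ← Finset.mem_sort (α := Fin (m+1)) (· ≤ ·)]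
    exact List.get_mem _ _
  · intro hi
    rw [← Finset.mem_sort (α := Fin (m+1)) (· ≤ ·)] at hi
    obtain ⟨idx, hidx⟩ := List.mem_iff_get.mp hi
    refine ⟨⟨(idx : ℕ), by rw [← sel_length h0 hc]; exact idx.isLt⟩, ?_⟩
    rw [selMap_eq_get h0 hc]
    simpa using hidx

end sel

/- ### Main theorem -/

/-- Cluster expansion norm identity: if `f_N ∈ L²((𝕋^d)^N)` is symmetric in its last
`N-1` variables, and its marginals admit a cluster expansion into correlation functions
`g^m` (indexed here by `m'` with `m = m'+1`) which are symmetric in their last `m-1`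
variables and integrate to zero in each of their last `m-1` variables, then
`∫ |f_N|² = ∑_{m=1}^{N} C(N-1, m-1) ∫ |g^m|²`. -/
theorem cluster_expansion_norm_identity (d N : ℕ) (hN : 1 ≤ N)
    (f : (Fin N → Torus d) → ℝ)
    (g : (m' : ℕ) → (Fin (m' + 1) → Torus d) → ℝ)
    (hfsym : ∀ π : Equiv.Perm (Fin N), π ⟨0, hN⟩ = ⟨0, hN⟩ → ∀ x, f (x ∘ π) = f x)
    (hfL2 : MemLp f 2 (volume : Measure (Fin N → Torus d)))
    (hgL2 : ∀ m' : ℕ, m' + 1 ≤ N →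
      MemLp (g m') 2 (volume : Measure (Fin (m' + 1) → Torus d)))
    (hgsym : ∀ m' : ℕ, m' + 1 ≤ N → ∀ π : Equiv.Perm (Fin (m' + 1)), π 0 = 0 →
      ∀ y, g m' (y ∘ π) = g m' y)
    (hgzero : ∀ m' : ℕ, m' + 1 ≤ N → ∀ j : Fin (m' + 1), j ≠ 0 →
      ∀ y : Fin (m' + 1) → Torus d,
        (∫ x : Torus d, g m' (Function.update y j x)) = 0)
    (hcluster : ∀ m' : ℕ, ∀ hm : m' + 1 ≤ N, ∀ y : Fin (m' + 1) → Torus d,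
      (∫ z : Fin (N - (m' + 1)) → Torus d, f (glueVars N (m' + 1) hm y z)) =
        ∑ n' ∈ Finset.range (m' + 1),
          ∑ σ ∈ Finset.powersetCard n' (Finset.univ.erase (0 : Fin (m' + 1))),
            g n' (selVars y σ)) :
    (∫ x : Fin N → Torus d, (f x) ^ 2) =
      ∑ m' ∈ Finset.range N,
        ((N - 1).choose m' : ℝ) * ∫ y : Fin (m' + 1) → Torus d, (g m' y) ^ 2 := by
  classical
  obtain ⟨M, rfl⟩ : ∃ M, N = M + 1 := ⟨N - 1, by omega⟩
  set 𝒮 := (Finset.range (M+1)).sigma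
      (fun n' => Finset.powersetCard n' (Finset.univ.erase (0 : Fin (M+1)))) with h𝒮
  -- basic facts about members of 𝒮
  have hmem : ∀ p : (_ : ℕ) × Finset (Fin (M+1)), p ∈ 𝒮 →
      p.1 ≤ M ∧ (0 : Fin (M+1)) ∉ p.2 ∧ p.2.card = p.1 := by
    intro p hp
    rw [h𝒮, Finset.mem_sigma] at hp
    obtain ⟨h1, h2⟩ := hp
    rw [Finset.mem_powersetCard] at h2
    refine ⟨by have := Finset.mem_range.mp h1; omega, ?_, h2.2⟩
    intro h0
    exact (Finset.mem_erase.mp (h2.1 h0)).1 rfl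
  -- Step 1 : pointwise cluster expansion of f
  have hfx : ∀ x : Fin (M+1) → Torus d, f x = ∑ p ∈ 𝒮, g p.1 (selVars x p.2) := by
    intro x
    rw [h𝒮, Finset.sum_sigma]
    have h0 : ∀ z : Fin (M + 1 - (M+1)) → Torus d,
        glueVars (M+1) (M+1) le_rfl x z = x := by
      intro z; funext i
      simp only [glueVars, dif_pos i.isLt]
    rw [← hcluster M le_rfl x]
    simp only [h0, integral_const, measure_univ, ENNReal.toReal_one, probReal_univ, one_smul]
  -- MemLp of each term
  have hgsm : ∀ p : (_ : ℕ) × Finset (Fin (M+1)), p ∈ 𝒮 →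
      MemLp (fun x : Fin (M+1) → Torus d => g p.1 (selVars x p.2)) 2 volume := by
    intro p hp
    obtain ⟨h1, h2, h3⟩ := hmem p hp
    exact (hgL2 p.1 (by omega)).comp_measurePreserving
      (measurePreserving_comp_inj (selMap p.1 p.2) (selMap_inj h2 h3))
  have hint : ∀ p ∈ 𝒮, ∀ q ∈ 𝒮,
      Integrable (fun x : Fin (M+1) → Torus d =>
        g p.1 (selVars x p.2) * g q.1 (selVars x q.2)) volume :=
    fun p hp q hq => memL2_mul_integrable (hgsm p hp) (hgsm q hq)
  -- cross terms vanish
  have key : ∀ p ∈ 𝒮, ∀ q ∈ 𝒮, (∃ j, j ∈ p.2 ∧ j ∉ q.2) →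
      (∫ x : Fin (M+1) → Torus d, g p.1 (selVars x p.2) * g q.1 (selVars x q.2)) = 0 := by
    rintro p hp q hq ⟨j, hjp, hjq⟩
    obtain ⟨hp1, hp2, hp3⟩ := hmem p hp
    obtain ⟨hq1, hq2, hq3⟩ := hmem q hq
    have hjne : j ≠ 0 := fun h => hp2 (h ▸ hjp)
    obtain ⟨k, hk⟩ := (selMap_surj_iff hp2 hp3 j).mpr (Finset.mem_insert_of_mem hjp)
    have hk0 : k ≠ 0 := by
      intro h; rw [h, selMap_zero hp2 hp3] at hk; exact hjne hk.symm
    have hj' : ∀ l, selMap q.1 q.2 l ≠ selMap p.1 p.2 k := by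
      intro l hl
      rw [hk] at hl
      have := (selMap_surj_iff hq2 hq3 j).mp ⟨l, hl⟩
      rcases Finset.mem_insert.mp this with h | h
      · exact hjne h
      · exact hjq h
    have := cross_zero (M := M) (g p.1) (g q.1) (selMap p.1 p.2) (selMap q.1 q.2)
      (selMap_inj hp2 hp3)
      (by simpa only [selVars_eq_comp] using hint p hp q hq)
      k (hgzero p.1 (by omega) k hk0) hj'
    simpa only [← selVars_eq_comp] using this
  have hcross : ∀ p ∈ 𝒮, ∀ q ∈ 𝒮, q ≠ p →
      (∫ x : Fin (M+1) → Torus d, g p.1 (selVars x p.2) * g q.1 (selVars x q.2)) = 0 := by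
    intro p hp q hq hne
    have hσ : p.2 ≠ q.2 := by
      intro h
      apply hne
      obtain ⟨_, _, hp3⟩ := hmem p hp
      obtain ⟨_, _, hq3⟩ := hmem q hq
      have h1 : q.1 = p.1 := by rw [← hp3, ← hq3, h]
      exact Sigma.ext h1 (heq_of_eq (h.symm))
    by_cases hsub : p.2 ⊆ q.2
    · have hss : p.2 ⊂ q.2 := ssubset_of_subset_of_ne hsub hσ
      obtain ⟨j, hjq, hjp⟩ := Finset.exists_of_ssubset hss
      have := key q hq p hp ⟨j, hjq, hjp⟩
      calc ∫ x : Fin (M+1) → Torus d, g p.1 (selVars x p.2) * g q.1 (selVars x q.2)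
          = ∫ x : Fin (M+1) → Torus d, g q.1 (selVars x q.2) * g p.1 (selVars x p.2) := by
            congr 1; funext x; ring
        _ = 0 := this
    · obtain ⟨j, hjp, hjq⟩ := Finset.not_subset.mp hsub
      exact key p hp q hq ⟨j, hjp, hjq⟩
  -- putting it together
  have hL2sq : ∀ p : (_ : ℕ) × Finset (Fin (M+1)), p ∈ 𝒮 →
      AEStronglyMeasurable (fun y : Fin (p.1 + 1) → Torus d => (g p.1 y) ^ 2)
        (volume : Measure (Fin (p.1 + 1) → Torus d)) := by
    intro p hp
    obtain ⟨h1, _, _⟩ := hmem p hp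
    have h := (hgL2 p.1 (by omega)).aestronglyMeasurable
    exact (h.mul h).congr (Filter.Eventually.of_forall fun y => (pow_two _).symm)
  calc (∫ x : Fin (M+1) → Torus d, (f x) ^ 2)
      = ∫ x : Fin (M+1) → Torus d,
          ∑ p ∈ 𝒮, ∑ q ∈ 𝒮, g p.1 (selVars x p.2) * g q.1 (selVars x q.2) := by
        congr 1; funext x
        rw [hfx x, sq, Finset.sum_mul_sum]
    _ = ∑ p ∈ 𝒮, ∑ q ∈ 𝒮,
          ∫ x : Fin (M+1) → Torus d, g p.1 (selVars x p.2) * g q.1 (selVars x q.2) := by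
        rw [integral_finset_sum _ (fun p hp =>
          integrable_finset_sum _ (fun q hq => hint p hp q hq))]
        exact Finset.sum_congr rfl fun p hp =>
          integral_finset_sum _ (fun q hq => hint p hp q hq)
    _ = ∑ p ∈ 𝒮, ∫ y : Fin (p.1 + 1) → Torus d, (g p.1 y) ^ 2 := by
        refine Finset.sum_congr rfl fun p hp => ?_
        rw [Finset.sum_eq_single_of_mem p hp (fun q hq hqp => hcross p hp q hq hqp)]
        obtain ⟨h1, h2, h3⟩ := hmem p hp
        have hdiag : (∫ x : Fin (M+1) → Torus d,
            g p.1 (selVars x p.2) * g p.1 (selVars x p.2))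
            = ∫ x : Fin (M+1) → Torus d, (fun y => (g p.1 y) ^ 2) (x ∘ selMap p.1 p.2) := by
          congr 1; funext x
          rw [selVars_eq_comp]; simp only [Function.comp_apply]; ring
        rw [hdiag, integral_comp_inj (selMap p.1 p.2) (selMap_inj h2 h3) _ (hL2sq p hp)]
    _ = ∑ m' ∈ Finset.range (M+1),
        ((M+1-1).choose m' : ℝ) * ∫ y : Fin (m' + 1) → Torus d, (g m' y) ^ 2 := by
        rw [h𝒮, Finset.sum_sigma]
        refine Finset.sum_congr rfl fun n' hn' => ?_
        show (∑ _s ∈ Finset.powersetCard n' (Finset.univ.erase (0 : Fin (M+1))),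
          ∫ y : Fin (n'+1) → Torus d, (g n' y)^2) = _
        rw [Finset.sum_const, Finset.card_powersetCard, nsmul_eq_mul]
        congr 2
        rw [Finset.card_erase_of_mem (Finset.mem_univ _), Finset.card_univ, Fintype.card_fin]
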